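/- In the category of polynomial functors, every cartesian monomorphism p → q is a coproduct inclusion: there exists a polynomial p' and an isomorphism q ≅ p + p' under p. -/

import Mathlib

universe u

structure PHom (p q : PFunctor.{u}) : Type u where
  onPos : p.A → q.A
  onDir : ∀ i : p.A, q.B (onPos i) → p.B i

/-- Composition of morphisms of polynomial functors. -/
def pcomp {p q r : PFunctor.{u}} (f : PHom p q) (g : PHom q r) : PHom p r where
  onPos := fun i => g.onPos (f.onPos i)
  onDir := fun i d => f.onDir i (g.onDir (f.onPos i) d)

/-- A morphism of polynomial functors is cartesian when each map on directions is
a bijection. -/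
def IsCartesian {p q : PFunctor.{u}} (f : PHom p q) : Prop :=
  ∀ i : p.A, Function.Bijective (f.onDir i)

/-- A monomorphism in the category of polynomial functors. -/
def PMono {p q : PFunctor.{u}} (f : PHom p q) : Prop :=
  ∀ (r : PFunctor.{u}) (α β : PHom r p), pcomp α f = pcomp β f → α = β

/-- Coproduct of polynomial functors, computed positionwise. -/
def psum (p q : PFunctor.{u}) : PFunctor.{u} :=
  ⟨p.A ⊕ q.A, Sum.elim p.B q.B⟩

/-- Extensionality for `PHom`. -/
theorem PHom.ext' {p q : PFunctor.{u}} {f g : PHom p q}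
    (h1 : ∀ i, f.onPos i = g.onPos i)
    (h2 : ∀ i (d : q.B (f.onPos i)),
      f.onDir i d = g.onDir i (cast (congrArg q.B (h1 i)) d)) : f = g := by
  obtain ⟨fp, fd⟩ := f
  obtain ⟨gp, gd⟩ := g
  have hp : fp = gp := funext h1
  subst hp
  simp only [PHom.mk.injEq, heq_eq_eq, true_and]
  funext i d
  have := h2 i d
  simpa using this

/-- Complement of a cartesian mono. -/
def pcompl {p q : PFunctor.{u}} (f : PHom p q) : PFunctor.{u} :=
  ⟨{j : q.A // ∀ i, f.onPos i ≠ j}, fun j => q.B j.1⟩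

def gpos {p q : PFunctor.{u}} (f : PHom p q) : (psum p (pcompl f)).A → q.A :=
  Sum.elim f.onPos Subtype.val

open Classical in
noncomputable def ginv {p q : PFunctor.{u}} (f : PHom p q) (j : q.A) :
    (psum p (pcompl f)).A :=
  if h : ∃ i, f.onPos i = j then Sum.inl h.choose
  else Sum.inr ⟨j, fun i hi => h ⟨i, hi⟩⟩

noncomputable def gEquiv {p q : PFunctor.{u}} (f : PHom p q)
    (inj : Function.Injective f.onPos) : (psum p (pcompl f)).A ≃ q.A where
  toFun := gpos f
  invFun := ginv f
  left_inv := by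
    rintro (i | ⟨j, hj⟩)
    · have h : ∃ i', f.onPos i' = gpos f (Sum.inl i) := ⟨i, rfl⟩
      simp only [ginv]
      exact (dif_pos h).trans (congrArg Sum.inl (inj h.choose_spec))
    · simp only [ginv, gpos]
      refine (dif_neg (show ¬ ∃ i, f.onPos i = j from fun ⟨i, hi⟩ => hj i hi)).trans ?_
      rfl
  right_inv := fun j => by
    unfold ginv
    by_cases h : ∃ i, f.onPos i = j
    · exact (congrArg (gpos f) (dif_pos h)).trans h.choose_spec
    · exact (congrArg (gpos f) (dif_neg h)).trans rfl

noncomputable def gdir {p q : PFunctor.{u}} (f : PHom p q) (hc : IsCartesian f) :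
    ∀ x, q.B (gpos f x) ≃ (psum p (pcompl f)).B x
  | Sum.inl i => Equiv.ofBijective (f.onDir i) (hc i)
  | Sum.inr _ => Equiv.refl _

theorem comp_edir {p q : PFunctor.{u}} (f : PHom p q) (hc : IsCartesian f) (i : p.A)
    (x : (psum p (pcompl f)).A) (hkey : x = Sum.inl i) (hx : gpos f x = f.onPos i)
    (d : (psum p (pcompl f)).B x) :
    f.onDir i (((gdir f hc x).symm.trans (Equiv.cast (congrArg q.B hx))) d)
      = cast (congrArg (psum p (pcompl f)).B hkey) d := by
  subst hkey
  simp only [gdir, Equiv.trans_apply, Equiv.cast_apply, cast_eq, cast_eq]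
  exact (Equiv.ofBijective (f.onDir i) (hc i)).apply_symm_apply d

theorem inj_of_mono {p q : PFunctor.{u}} (f : PHom p q) (hc : IsCartesian f)
    (hm : PMono f) : Function.Injective f.onPos := by
  intro i i' h
  set r : PFunctor.{u} := ⟨PUnit, fun _ => q.B (f.onPos i)⟩ with hr
  set α : PHom r p := ⟨fun _ => i, fun _ => (Equiv.ofBijective (f.onDir i) (hc i)).symm⟩ with hα
  set β : PHom r p :=
    ⟨fun _ => i',
     fun _ d => cast (congrArg q.B h).symm ((Equiv.ofBijective (f.onDir i') (hc i')).symm d)⟩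
    with hβ
  have hcomp : pcomp α f = pcomp β f := by
    apply PHom.ext' (h1 := fun _ => h)
    intro u d
    simp only [pcomp, α, β]
    rw [Equiv.ofBijective_symm_apply_apply, Equiv.ofBijective_symm_apply_apply (f.onDir i) (hc i) d]
    exact ((cast_cast _ _ d).trans (cast_eq _ d)).symm
  have := hm r α β hcomp
  exact congrArg (fun g => g.onPos PUnit.unit) this

theorem cartesian_mono_is_coproduct_inclusion {p q : PFunctor.{u}} (f : PHom p q)
    (hc : IsCartesian f) (hm : PMono f) :
    ∃ (p' : PFunctor.{u}) (epos : q.A ≃ (psum p p').A)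
      (edir : ∀ j : q.A, (psum p p').B (epos j) ≃ q.B j),
      pcomp f ⟨fun j => epos j, fun j => edir j⟩ =
        (⟨Sum.inl, fun _ => id⟩ : PHom p (psum p p')) := by
  have inj : Function.Injective f.onPos := inj_of_mono f hc hm
  refine ⟨pcompl f, (gEquiv f inj).symm,
    fun j => (gdir f hc ((gEquiv f inj).symm j)).symm.trans
      (Equiv.cast (congrArg q.B ((gEquiv f inj).apply_symm_apply j))), ?_⟩
  have key : ∀ i : p.A, (gEquiv f inj).symm (f.onPos i) = Sum.inl i :=
    fun i => (gEquiv f inj).symm_apply_apply (Sum.inl i)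
  apply PHom.ext' (h1 := fun i => key i)
  intro i d
  exact comp_edir f hc i ((gEquiv f inj).symm (f.onPos i)) (key i)
    ((gEquiv f inj).apply_symm_apply (f.onPos i)) d
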